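/- Assume the two-strain SI model hypotheses. If R_0^x > 1 ≥ R_0^y, then the set of equilibria of the two-strain SI system is exactly {E_0, E_1}, where E_0 = (Λ/μ_S, 0, 0) and E_1 = (1/r_x, a ↦ (μ_S(R_0^x − 1)/r_x)·π_x(a), 0). -/

import Mathlib

open MeasureTheory Real Set

/-- Survival probability `π(a) = exp(-∫_0^a μ)`. -/
noncomputable def survival (μ : ℝ → ℝ) (a : ℝ) : ℝ :=
  Real.exp (-(∫ s in (0:ℝ)..a, μ s))

section Aux
variable (μ : ℝ → ℝ) (hc : ContinuousOn μ (Ici 0))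
include hc

noncomputable def μext (μ : ℝ → ℝ) : ℝ → ℝ := fun s => μ (max s 0)

omit hc in
lemma μext_cont (hc : ContinuousOn μ (Ici 0)) : Continuous (μext μ) :=
  hc.comp_continuous (continuous_id.max continuous_const) (fun x => le_max_right x 0)

omit hc in
lemma μext_eq {a : ℝ} (ha : 0 ≤ a) : μext μ a = μ a := by
  simp [μext, max_eq_left ha]

omit hc in
lemma integral_μext_eq {a : ℝ} (ha : 0 ≤ a) :
    (∫ s in (0:ℝ)..a, μext μ s) = ∫ s in (0:ℝ)..a, μ s := by
  apply intervalIntegral.integral_congr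
  intro s hs
  rw [uIcc_of_le ha] at hs
  exact μext_eq μ hs.1

lemma F_hasDerivAt (b : ℝ) :
    HasDerivAt (fun u => ∫ s in (0:ℝ)..u, μext μ s) (μext μ b) b :=
  ((μext_cont μ hc).integral_hasStrictDerivAt 0 b).hasDerivAt

lemma survival_hasDeriv {a : ℝ} (ha : 0 ≤ a) :
    HasDerivWithinAt (survival μ) (-(μ a) * survival μ a) (Ici 0) a := by
  have h : HasDerivAt (fun u => Real.exp (-(∫ s in (0:ℝ)..u, μext μ s)))
      (Real.exp (-(∫ s in (0:ℝ)..a, μext μ s)) * (-(μext μ a))) a :=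
    (F_hasDerivAt μ hc a).neg.exp
  have h2 := h.hasDerivWithinAt (s := Ici 0)
  have heq : ∀ u ∈ Ici (0:ℝ), survival μ u = Real.exp (-(∫ s in (0:ℝ)..u, μext μ s)) := by
    intro u hu; rw [survival, integral_μext_eq μ hu]
  have h3 := h2.congr heq (heq a ha)
  rw [integral_μext_eq μ ha, μext_eq μ ha] at h3
  refine h3.congr_deriv ?_
  rw [survival]; ring

omit hc in
lemma survival_zero : survival μ 0 = 1 := by simp [survival]

omit hc in
lemma survival_pos (a : ℝ) : 0 < survival μ a := Real.exp_pos _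

lemma ode_solution (x : ℝ → ℝ)
    (hx : ∀ a, 0 ≤ a → HasDerivWithinAt x (-(μ a) * x a) (Ici 0) a) :
    ∀ b, 0 ≤ b → x b = x 0 * survival μ b := by
  intro b hb
  set F : ℝ → ℝ := fun u => ∫ s in (0:ℝ)..u, μext μ s with hF
  have hFd : ∀ u, HasDerivAt F (μext μ u) u := F_hasDerivAt μ hc
  set g : ℝ → ℝ := fun u => x u * Real.exp (F u) with hg
  have hEc : Continuous fun u => Real.exp (F u) :=
    continuous_iff_continuousAt.2 fun u => ((hFd u).continuousAt).rexp
  have hcont : ContinuousOn g (Icc 0 b) := by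
    apply ContinuousOn.mul
    · exact fun u hu => ((hx u hu.1).continuousWithinAt).mono (fun v hv => hv.1)
    · exact hEc.continuousOn
  have hderiv : ∀ u ∈ Ico 0 b, HasDerivWithinAt g 0 (Ici u) u := by
    intro u hu
    have hxu : HasDerivWithinAt x (-(μ u) * x u) (Ici u) u :=
      (hx u hu.1).mono (Ici_subset_Ici.2 hu.1)
    have hEu : HasDerivWithinAt (fun v => Real.exp (F v)) (Real.exp (F u) * μext μ u) (Ici u) u :=
      ((hFd u).exp).hasDerivWithinAt
    have := hxu.mul hEu
    rw [μext_eq μ hu.1] at this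
    refine this.congr_deriv ?_
    ring
  have hgb := constant_of_has_deriv_right_zero hcont hderiv b (by constructor <;> simp [hb])
  have hg0 : g 0 = x 0 := by simp [hg, hF]
  have hEb : Real.exp (F b) ≠ 0 := Real.exp_ne_zero _
  have : x b * Real.exp (F b) = x 0 := by rw [← hg0]; exact hgb
  have hxb : x b = x 0 * Real.exp (-(F b)) := by
    rw [Real.exp_neg]
    field_simp at this ⊢
    linarith [this]
  rw [hxb, survival, ← integral_μext_eq μ hb]

end Aux

/-- An equilibrium of the two-strain infection-age structured SI system:
`S ≥ 0`, `x, y ≥ 0` are continuously differentiable on `[0,∞)` with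
`x' = -μₓ x`, `y' = -μ_y y`, renewal boundary conditions
`x 0 = S ∫ βₓ x`, `y 0 = S ∫ β_y y`, and the balance `Λ = μ_S S + x 0 + y 0`. -/
def IsEquilibrium (Λ μS : ℝ) (μx μy βx βy : ℝ → ℝ)
    (S : ℝ) (x y : ℝ → ℝ) : Prop :=
  0 ≤ S ∧ (∀ a, 0 ≤ a → 0 ≤ x a) ∧ (∀ a, 0 ≤ a → 0 ≤ y a) ∧
  (∀ a, 0 ≤ a → HasDerivWithinAt x (-(μx a) * x a) (Ici 0) a) ∧
  (∀ a, 0 ≤ a → HasDerivWithinAt y (-(μy a) * y a) (Ici 0) a) ∧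
  x 0 = S * ∫ a in Ici (0:ℝ), βx a * x a ∧
  y 0 = S * ∫ a in Ici (0:ℝ), βy a * y a ∧
  Λ = μS * S + x 0 + y 0

/-- **If `R₀ˣ > 1 ≥ R₀ʸ`, the set of equilibria of the two-strain SI system
is exactly `{E₀, E₁}`.** -/
theorem equilibria_E0_E1 (Λ μS μ0 : ℝ) (μx μy βx βy : ℝ → ℝ)
    (hΛ : 0 < Λ) (hμS : 0 < μS) (hμ0 : 0 < μ0) (hμSμ0 : μ0 ≤ μS)
    (hμxc : ContinuousOn μx (Ici 0)) (hμyc : ContinuousOn μy (Ici 0))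
    (hμxb : ∀ a, 0 ≤ a → μ0 ≤ μx a) (hμyb : ∀ a, 0 ≤ a → μ0 ≤ μy a)
    (hβxm : Measurable βx) (hβym : Measurable βy)
    (hβxnn : ∀ a, 0 ≤ βx a) (hβynn : ∀ a, 0 ≤ βy a)
    (Mx My : ℝ) (hβxM : ∀ a, βx a ≤ Mx) (hβyM : ∀ a, βy a ≤ My)
    (rx ry : ℝ)
    (hrx : rx = ∫ a in Ici (0:ℝ), βx a * survival μx a)
    (hry : ry = ∫ a in Ici (0:ℝ), βy a * survival μy a)
    (hrxpos : 0 < rx) (hrypos : 0 < ry)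
    (R0x R0y : ℝ) (hR0x : R0x = Λ * rx / μS) (hR0y : R0y = Λ * ry / μS)
    (R0x R0y : ℝ) (hR0x : R0x = Λ * rx / μS) (hR0y : R0y = Λ * ry / μS)
    (hRx : 1 < R0x) (hRy : R0y ≤ 1) :
    IsEquilibrium Λ μS μx μy βx βy (Λ / μS) (fun _ => 0) (fun _ => 0) ∧
    IsEquilibrium Λ μS μx μy βx βy (1 / rx)
      (fun a => μS * (R0x - 1) / rx * survival μx a) (fun _ => 0) ∧
    ∀ S x y, IsEquilibrium Λ μS μx μy βx βy S x y →
      (S = Λ / μS ∧ (∀ a, 0 ≤ a → x a = 0) ∧ (∀ a, 0 ≤ a → y a = 0)) ∨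
      (S = 1 / rx ∧ (∀ a, 0 ≤ a → x a = μS * (R0x - 1) / rx * survival μx a) ∧
        (∀ a, 0 ≤ a → y a = 0)) := by

  have hcpos : 0 < μS * (R0x - 1) / rx :=
    div_pos (mul_pos hμS (by linarith)) hrxpos
  refine ⟨?_, ?_, ?_⟩
  · refine ⟨(div_pos hΛ hμS).le, fun a _ => le_rfl, fun a _ => le_rfl, ?_, ?_, by simp, by simp,
      by field_simp; ring⟩
    · intro a _; simpa using hasDerivWithinAt_const a (Ici (0:ℝ)) (0:ℝ)
    · intro a _; simpa using hasDerivWithinAt_const a (Ici (0:ℝ)) (0:ℝ)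
  · refine ⟨by positivity, fun a _ => mul_nonneg hcpos.le (survival_pos μx a).le,
      fun a _ => le_rfl, ?_, ?_, ?_, by simp, ?_⟩
    · intro a ha
      have h := (survival_hasDeriv μx hμxc ha).const_mul (μS * (R0x - 1) / rx)
      refine h.congr_deriv ?_
      ring
    · intro a _; simpa using hasDerivWithinAt_const a (Ici (0:ℝ)) (0:ℝ)
    · have hmul : ∀ a, βx a * (μS * (R0x - 1) / rx * survival μx a)
          = (μS * (R0x - 1) / rx) * (βx a * survival μx a) := fun a => by ring
      simp only [hmul]
      rw [MeasureTheory.integral_const_mul, ← hrx, survival_zero]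
      field_simp
    · show Λ = μS * (1 / rx) + μS * (R0x - 1) / rx * survival μx 0 + 0
      rw [survival_zero, hR0x]
      field_simp
      ring
  · intro S x y h
    obtain ⟨hS, hxnn, hynn, hxd, hyd, hxb, hyb, hbal⟩ := h
    have hxa := ode_solution μx hμxc x hxd
    have hya := ode_solution μy hμyc y hyd
    have hxint : (∫ a in Ici (0:ℝ), βx a * x a) = x 0 * rx := by
      rw [hrx, ← MeasureTheory.integral_const_mul]
      apply setIntegral_congr_fun measurableSet_Ici
      intro a ha
      simp only
      rw [hxa a ha]
      ring
    have hyint : (∫ a in Ici (0:ℝ), βy a * y a) = y 0 * ry := by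
      rw [hry, ← MeasureTheory.integral_const_mul]
      apply setIntegral_congr_fun measurableSet_Ici
      intro a ha
      simp only
      rw [hya a ha]
      ring
    rw [hxint] at hxb
    rw [hyint] at hyb
    have hy0 : y 0 = 0 := by
      by_contra h0
      have h1 : y 0 * (1 - S * ry) = 0 := by linear_combination hyb
      have hSry : S * ry = 1 := by
        rcases mul_eq_zero.1 h1 with h2 | h2
        · exact absurd h2 h0
        · linarith
      have hy0pos : 0 < y 0 := lt_of_le_of_ne (hynn 0 le_rfl) (Ne.symm h0)
      have hx0nn : 0 ≤ x 0 := hxnn 0 le_rfl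
      have hryle : Λ * ry ≤ μS := by
        rw [hR0y, div_le_one hμS] at hRy
        exact hRy
      have hμSle : μS * S = μS / ry := by
        rw [eq_div_iff hrypos.ne']
        linear_combination μS * hSry
      have hμSry : Λ ≤ μS / ry := by
        rw [le_div_iff₀ hrypos]
        exact hryle
      rw [hμSle] at hbal
      linarith
    have hyall : ∀ a, 0 ≤ a → y a = 0 := fun a ha => by rw [hya a ha, hy0, zero_mul]
    by_cases hx0 : x 0 = 0
    · left
      refine ⟨?_, fun a ha => by rw [hxa a ha, hx0, zero_mul], hyall⟩
      rw [hx0, hy0] at hbal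
      rw [eq_div_iff hμS.ne']
      linarith
    · right
      have h1 : x 0 * (1 - S * rx) = 0 := by linear_combination hxb
      have hSrx : S * rx = 1 := by
        rcases mul_eq_zero.1 h1 with h2 | h2
        · exact absurd h2 hx0
        · linarith
      have hSval : S = 1 / rx := by
        rw [eq_div_iff hrxpos.ne']
        exact hSrx
      have hx0val : x 0 = μS * (R0x - 1) / rx := by
        rw [hSval, hy0] at hbal
        rw [hR0x]
        field_simp at hbal ⊢
        linarith
      exact ⟨hSval, fun a ha => by rw [hxa a ha, hx0val], hyall⟩
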